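/- Let n ≥ 2 and for k = 1,…,n set A_k = sin((k−1)π/n) X + cos((k−1)π/n) Z and B_k = sin((2k−1)π/(2n)) X + cos((2k−1)π/(2n)) Z, and let |ψ⟩ = (|00⟩+|11⟩)/√2. Then the chained Bell operator C_n = Σ_{k=1}^{n−1} (A_k⊗B_k + A_{k+1}⊗B_k) + A_n⊗B_n − A₁⊗B_n satisfies ⟨ψ|C_n|ψ⟩ = 2n cos(π/(2n)). -/
import Mathlib


open Matrix Kronecker Real

lemma key0 (M N : Matrix (Fin 2) (Fin 2) ℂ)
    (ψ : Fin 2 × Fin 2 → ℂ)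
    (hψ : ψ = fun p => if p.1 = p.2 then ((Real.sqrt 2)⁻¹ : ℂ) else 0) :
    star ψ ⬝ᵥ ((M ⊗ₖ N) *ᵥ ψ) =
      (M 0 0 * N 0 0 + M 0 1 * N 0 1 + M 1 0 * N 1 0 + M 1 1 * N 1 1) / 2 := by
  subst hψ
  have h : ((Real.sqrt 2 : ℝ) : ℂ)⁻¹ * ((Real.sqrt 2 : ℝ) : ℂ)⁻¹ = 1/2 := by
    rw [← mul_inv, ← Complex.ofReal_mul, Real.mul_self_sqrt (by norm_num)]
    norm_num
  simp [dotProduct, mulVec, Fintype.sum_prod_type, Fin.sum_univ_succ, kroneckerMap_apply,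
    Pi.star_apply]
  ring_nf
  rw [show ((Real.sqrt 2 : ℝ) : ℂ)⁻¹ ^ 2 = 1/2 by rw [sq]; exact h]
  ring

lemma key1 (a b : ℝ)
    (X Z : Matrix (Fin 2) (Fin 2) ℂ)
    (hX : X = !![0, 1; 1, 0]) (hZ : Z = !![1, 0; 0, -1])
    (ψ : Fin 2 × Fin 2 → ℂ)
    (hψ : ψ = fun p => if p.1 = p.2 then ((Real.sqrt 2)⁻¹ : ℂ) else 0) :
    star ψ ⬝ᵥ ((((Real.sin a : ℂ) • X + (Real.cos a : ℂ) • Z) ⊗ₖ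
      ((Real.sin b : ℂ) • X + (Real.cos b : ℂ) • Z)) *ᵥ ψ) = (Real.cos (a - b) : ℂ) := by
  rw [key0 _ _ ψ hψ]
  subst hX hZ
  simp [Matrix.add_apply, Matrix.smul_apply]
  rw [Complex.cos_sub]
  ring

lemma quad_sum {ι : Type*} (s : Finset ι) (f : ι → Matrix (Fin 2 × Fin 2) (Fin 2 × Fin 2) ℂ)
    (ψ : Fin 2 × Fin 2 → ℂ) :
    star ψ ⬝ᵥ ((∑ i ∈ s, f i) *ᵥ ψ) = ∑ i ∈ s, star ψ ⬝ᵥ (f i *ᵥ ψ) := by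
  induction s using Finset.cons_induction with
  | empty => simp
  | cons a s ha ih =>
    rw [Finset.sum_cons, Finset.sum_cons, add_mulVec, dotProduct_add, ih]

theorem stmt11 (n : ℕ) (hn : 2 ≤ n)
    (X Z : Matrix (Fin 2) (Fin 2) ℂ)
    (hX : X = !![0, 1; 1, 0]) (hZ : Z = !![1, 0; 0, -1])
    (A B : ℕ → Matrix (Fin 2) (Fin 2) ℂ)
    (hA : ∀ k : ℕ, A k = (Real.sin (((k : ℝ) - 1) * π / n) : ℂ) • X
        + (Real.cos (((k : ℝ) - 1) * π / n) : ℂ) • Z)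
    (hB : ∀ k : ℕ, B k = (Real.sin ((2 * (k : ℝ) - 1) * π / (2 * n)) : ℂ) • X
        + (Real.cos ((2 * (k : ℝ) - 1) * π / (2 * n)) : ℂ) • Z)
    (ψ : Fin 2 × Fin 2 → ℂ)
    (hψ : ψ = fun p => if p.1 = p.2 then ((Real.sqrt 2)⁻¹ : ℂ) else 0)
    (C : Matrix (Fin 2 × Fin 2) (Fin 2 × Fin 2) ℂ)
    (hC : C = (∑ k ∈ Finset.Icc 1 (n - 1), (A k ⊗ₖ B k + A (k + 1) ⊗ₖ B k))
        + A n ⊗ₖ B n - A 1 ⊗ₖ B n) :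
    star ψ ⬝ᵥ (C *ᵥ ψ) = (2 * n * Real.cos (π / (2 * n)) : ℂ) := by
  have hn0 : (n : ℝ) ≠ 0 := Nat.cast_ne_zero.mpr (by omega)
  have hterm : ∀ j k : ℕ, star ψ ⬝ᵥ ((A j ⊗ₖ B k) *ᵥ ψ)
      = (Real.cos (((j : ℝ) - 1) * π / n - (2 * (k : ℝ) - 1) * π / (2 * n)) : ℂ) := by
    intro j k
    rw [hA, hB]
    exact key1 _ _ X Z hX hZ ψ hψ
  subst hC
  rw [sub_mulVec, dotProduct_sub, add_mulVec, dotProduct_add, quad_sum]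
  have hsum : ∑ k ∈ Finset.Icc 1 (n - 1), star ψ ⬝ᵥ ((A k ⊗ₖ B k + A (k + 1) ⊗ₖ B k) *ᵥ ψ)
      = ((n : ℂ) - 1) * (2 * (Real.cos (π / (2 * n)) : ℂ)) := by
    rw [Finset.sum_congr rfl (g := fun _ => 2 * (Real.cos (π / (2 * (n : ℝ))) : ℂ))
      (fun k hk => ?_), Finset.sum_const, Nat.card_Icc]
    · have : (n - 1 + 1 - 1 : ℕ) = n - 1 := by omega
      rw [this, nsmul_eq_mul]
      have : ((n - 1 : ℕ) : ℂ) = (n : ℂ) - 1 := by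
        push_cast [Nat.cast_sub (by omega : 1 ≤ n)]; ring
      rw [this]
    · rw [add_mulVec, dotProduct_add, hterm, hterm]
      have h1 : (((k : ℝ) - 1) * π / n - (2 * (k : ℝ) - 1) * π / (2 * n)) = -(π / (2 * n)) := by
        field_simp; ring
      have h2 : ((((k + 1 : ℕ) : ℝ) - 1) * π / n - (2 * (k : ℝ) - 1) * π / (2 * n))
          = π / (2 * n) := by
        push_cast
        field_simp
        ring
      rw [h1, h2, Real.cos_neg]
      ring
  rw [hsum, hterm, hterm]
  have h3 : (((n : ℝ) - 1) * π / n - (2 * (n : ℝ) - 1) * π / (2 * n)) = -(π / (2 * n)) := by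
    field_simp; ring
  have h4 : ((((1 : ℕ) : ℝ) - 1) * π / n - (2 * (n : ℝ) - 1) * π / (2 * n))
      = -(π - π / (2 * n)) := by
    push_cast
    field_simp
    ring
  rw [h3, h4, Real.cos_neg, Real.cos_neg, Real.cos_pi_sub]
  push_cast
  ring
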